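/- Let P₀ be a probability measure on ℝ^d whose support is contained in the closed ball of radius R centered at the origin, and let p_t denote the isotropic forward Ornstein–Uhlenbeck marginal density started from P₀. Then for every δ > 0, every t ≥ δ, and every x ∈ ℝ^d, |∇ log p_t(x) + (1−e^{−t})^{−1} x| ≤ (R/(1−e^{−δ})) e^{−t/2}. (Gradient bound of Corollary 3.9 for bounded-support targets with early stopping.) -/

import Mathlib

open MeasureTheory Real

noncomputable section

/-- Marginal density at time `t > 0` of the isotropic forward Ornstein–Uhlenbeck
process started from the probability measure `P₀`. -/
def ouDensityIso {d : ℕ} (P₀ : Measure (EuclideanSpace ℝ (Fin d)))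
    (t : ℝ) (x : EuclideanSpace ℝ (Fin d)) : ℝ :=
  (2 * π * (1 - Real.exp (-t))) ^ (-(d : ℝ) / 2) *
    ∫ y, Real.exp (-‖x - Real.exp (-t / 2) • y‖ ^ 2 / (2 * (1 - Real.exp (-t)))) ∂P₀

lemma aux_hasFDerivAt {d : ℕ} (s : ℝ) (c z : EuclideanSpace ℝ (Fin d)) :
    HasFDerivAt (fun w => Real.exp (-‖w - c‖ ^ 2 / (2 * s)))
      ((InnerProductSpace.toDual ℝ (EuclideanSpace ℝ (Fin d)))
        ((Real.exp (-‖z - c‖ ^ 2 / (2 * s)) * (-s⁻¹)) • (z - c))) z := by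
  have h1 : HasFDerivAt (fun w : EuclideanSpace ℝ (Fin d) => ‖w - c‖ ^ 2)
      (2 • innerSL ℝ (z - c)) z := by
    simpa using ((hasFDerivAt_id z).sub_const c).norm_sq
  have h2 := (h1.const_mul (-(2 * s)⁻¹)).exp
  have hfun : (fun w : EuclideanSpace ℝ (Fin d) => Real.exp (-‖w - c‖ ^ 2 / (2 * s)))
      = fun w => Real.exp (-(2 * s)⁻¹ * ‖w - c‖ ^ 2) := funext fun w => by congr 1; ring
  rw [hfun]
  refine h2.congr_fderiv ?_
  rw [show -‖z - c‖ ^ 2 / (2 * s) = -(2 * s)⁻¹ * ‖z - c‖ ^ 2 from by ring]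
  ext w
  simp only [InnerProductSpace.toDual_apply_apply, ContinuousLinearMap.smul_apply, innerSL_apply_apply,
    real_inner_smul_left, smul_eq_mul]
  rw [mul_inv]
  ring

set_option maxHeartbeats 1000000 in
/-- Gradient bound of Corollary 3.9 for bounded-support targets with early stopping. -/
theorem stmt7 {d : ℕ}
    (P₀ : Measure (EuclideanSpace ℝ (Fin d))) [IsProbabilityMeasure P₀]
    (R : ℝ)
    (hsupp : P₀ (Metric.closedBall (0 : EuclideanSpace ℝ (Fin d)) R)ᶜ = 0)
    (δ : ℝ) (hδ : 0 < δ) (t : ℝ) (ht : δ ≤ t) (x : EuclideanSpace ℝ (Fin d)) :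
    ‖gradient (fun z => Real.log (ouDensityIso P₀ t z)) x + (1 - Real.exp (-t))⁻¹ • x‖
      ≤ R / (1 - Real.exp (-δ)) * Real.exp (-t / 2) := by
  set a := Real.exp (-t / 2) with ha_def
  set s := 1 - Real.exp (-t) with hs_def
  have ht0 : 0 < t := lt_of_lt_of_le hδ ht
  have hs : 0 < s := by
    have : Real.exp (-t) < 1 := Real.exp_lt_one_iff.mpr (by linarith)
    simp [hs_def]; linarith
  have hδs : 0 < 1 - Real.exp (-δ) := by
    have : Real.exp (-δ) < 1 := Real.exp_lt_one_iff.mpr (by linarith)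
    linarith
  have hδle : 1 - Real.exp (-δ) ≤ s := by
    have : Real.exp (-t) ≤ Real.exp (-δ) := Real.exp_le_exp.mpr (by linarith)
    simp [hs_def]; linarith
  have ha : 0 < a := Real.exp_pos _
  have hR : 0 ≤ R := by
    by_contra h
    push_neg at h
    rw [Metric.closedBall_eq_empty.2 h, Set.compl_empty] at hsupp
    simp [measure_univ] at hsupp
  have hae : ∀ᵐ y ∂P₀, ‖y‖ ≤ R := by
    filter_upwards [measure_eq_zero_iff_ae_notMem.mp hsupp] with y hy
    simpa [dist_zero_right] using Set.not_notMem.mp hy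
  set F : (EuclideanSpace ℝ (Fin d)) → (EuclideanSpace ℝ (Fin d)) → ℝ := fun z y => Real.exp (-‖z - a • y‖ ^ 2 / (2 * s)) with hF_def
  set G : (EuclideanSpace ℝ (Fin d)) → (EuclideanSpace ℝ (Fin d)) → (EuclideanSpace ℝ (Fin d)) := fun z y => (F z y * (-s⁻¹)) • (z - a • y) with hG_def
  set f : (EuclideanSpace ℝ (Fin d)) → ℝ := fun z => ∫ y, F z y ∂P₀ with hf_def
  have hFpos : ∀ z y, 0 < F z y := fun z y => Real.exp_pos _
  have hFle1 : ∀ z y, F z y ≤ 1 := fun z y => by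
    apply Real.exp_le_one_iff.mpr
    have : (0:ℝ) ≤ ‖z - a • y‖ ^ 2 := by positivity
    have h2s : (0:ℝ) < 2 * s := by linarith
    exact div_nonpos_of_nonpos_of_nonneg (by linarith) (le_of_lt h2s)
  have hFcont : ∀ z, Continuous (F z) := fun z => by fun_prop
  have hF_int : ∀ z, Integrable (F z) P₀ := fun z =>
    (integrable_const (1:ℝ)).mono (hFcont z).aestronglyMeasurable
      (ae_of_all _ fun y => by
        simp only [Real.norm_eq_abs, abs_of_pos (hFpos z y), norm_one]
        exact hFle1 z y)
  have hnorm_le : ∀ z y : (EuclideanSpace ℝ (Fin d)), ‖y‖ ≤ R → ‖z - a • y‖ ≤ ‖z‖ + a * R := fun z y hy => by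
    refine (norm_sub_le _ _).trans ?_
    rw [norm_smul, Real.norm_eq_abs, abs_of_pos ha]
    nlinarith
  have hfpos : ∀ z, 0 < f z := by
    intro z
    set c : ℝ := Real.exp (-(‖z‖ + a * R) ^ 2 / (2 * s)) with hc_def
    have hc : 0 < c := Real.exp_pos _
    have hle : ∀ᵐ y ∂P₀, c ≤ F z y := by
      filter_upwards [hae] with y hy
      apply Real.exp_le_exp.mpr
      have hn := hnorm_le z y hy
      have h1 : ‖z - a • y‖ ^ 2 ≤ (‖z‖ + a * R) ^ 2 :=
        pow_le_pow_left₀ (norm_nonneg _) hn 2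
      have h2s : (0:ℝ) < 2 * s := by linarith
      rw [div_le_div_iff₀ h2s h2s]
      nlinarith
    calc (0:ℝ) < c := hc
      _ = ∫ _, c ∂P₀ := by simp
      _ ≤ f z := integral_mono_ae (integrable_const c) (hF_int z) hle
  -- derivative under the integral
  set F' : (EuclideanSpace ℝ (Fin d)) → (EuclideanSpace ℝ (Fin d)) → ((EuclideanSpace ℝ (Fin d)) →L[ℝ] ℝ) := fun z y => (InnerProductSpace.toDual ℝ (EuclideanSpace ℝ (Fin d))) (G z y) with hF'_def
  have hderiv : ∀ (y : (EuclideanSpace ℝ (Fin d))) (z : (EuclideanSpace ℝ (Fin d))), HasFDerivAt (fun w => F w y) (F' z y) z := fun y z =>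
    aux_hasFDerivAt s (a • y) z
  have hGnorm : ∀ z y, ‖G z y‖ = F z y * s⁻¹ * ‖z - a • y‖ := fun z y => by
    rw [hG_def]
    simp only [norm_smul, Real.norm_eq_abs]
    rw [abs_of_neg (by nlinarith [hFpos z y, inv_pos.mpr hs] : F z y * (-s⁻¹) < 0)]
    ring
  set bound : ℝ := s⁻¹ * (‖x‖ + 1 + a * R) with hbound_def
  have h_bound : ∀ᵐ y ∂P₀, ∀ z ∈ Metric.ball x 1, ‖F' z y‖ ≤ bound := by
    filter_upwards [hae] with y hy z hz
    rw [hF'_def]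
    simp only
    rw [(InnerProductSpace.toDual ℝ (EuclideanSpace ℝ (Fin d))).norm_map, hGnorm]
    have h1 : ‖z - a • y‖ ≤ ‖x‖ + 1 + a * R := by
      have : ‖z - a • y‖ ≤ ‖z - x‖ + ‖x - a • y‖ := by
        simpa using norm_sub_le_norm_sub_add_norm_sub z x (a • y)
      have hzx : ‖z - x‖ ≤ 1 := by
        rw [← dist_eq_norm]
        exact le_of_lt (Metric.mem_ball.mp hz)
      have := hnorm_le x y hy
      linarith
    have hFz := hFpos z y
    have hF1 := hFle1 z y
    rw [hbound_def]
    have hsi : (0:ℝ) < s⁻¹ := inv_pos.mpr hs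
    have hxr : (0:ℝ) ≤ ‖x‖ + 1 + a * R := by positivity
    calc F z y * s⁻¹ * ‖z - a • y‖
        ≤ 1 * s⁻¹ * (‖x‖ + 1 + a * R) :=
          mul_le_mul (mul_le_mul_of_nonneg_right hF1 hsi.le) h1 (norm_nonneg _)
            (by simpa using hsi.le)
      _ = s⁻¹ * (‖x‖ + 1 + a * R) := by ring
  have hF'meas : AEStronglyMeasurable (F' x) P₀ := by
    apply Continuous.aestronglyMeasurable
    exact (InnerProductSpace.toDual ℝ (EuclideanSpace ℝ (Fin d))).continuous.comp (by fun_prop)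
  have hFmeas : ∀ᶠ z in nhds x, AEStronglyMeasurable (F z) P₀ :=
    Filter.Eventually.of_forall fun z => (hFcont z).aestronglyMeasurable
  have hfd : HasFDerivAt f (∫ y, F' x y ∂P₀) x :=
    hasFDerivAt_integral_of_dominated_of_fderiv_le (Metric.ball_mem_nhds x one_pos) hFmeas (hF_int x) hF'meas
      h_bound (integrable_const bound)
      (ae_of_all _ fun y z _ => hderiv y z)
  set v : (EuclideanSpace ℝ (Fin d)) := ∫ y, G x y ∂P₀ with hv_def
  have hInt_eq : ∫ y, F' x y ∂P₀ = (InnerProductSpace.toDual ℝ (EuclideanSpace ℝ (Fin d))) v :=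
    (InnerProductSpace.toDual ℝ (EuclideanSpace ℝ (Fin d))).toLinearIsometry.integral_comp_comm (G x)
  have hgrad_f : HasGradientAt f v x := by
    rw [hasGradientAt_iff_hasFDerivAt]
    rw [← hInt_eq]
    exact hfd
  have hgrad_log : HasGradientAt (fun z => Real.log (f z)) ((f x)⁻¹ • v) x := by
    have h1 := (Real.hasDerivAt_log (hfpos x).ne').comp_hasFDerivAt x hgrad_f.hasFDerivAt
    rw [hasGradientAt_iff_hasFDerivAt, LinearIsometryEquiv.map_smul]
    exact h1
  have hC : 0 < (2 * π * s) ^ (-(d:ℝ) / 2) :=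
    Real.rpow_pos_of_pos (by positivity) _
  have hfun : (fun z => Real.log (ouDensityIso P₀ t z))
      = fun z => Real.log ((2 * π * s) ^ (-(d:ℝ) / 2)) + Real.log (f z) := by
    funext z
    rw [ouDensityIso, Real.log_mul hC.ne' (hfpos z).ne']
  have hgrad_total : gradient (fun z => Real.log (ouDensityIso P₀ t z)) x = (f x)⁻¹ • v := by
    apply HasGradientAt.gradient
    rw [hfun, hasGradientAt_iff_hasFDerivAt]
    exact hgrad_log.hasFDerivAt.const_add _
  rw [hgrad_total]
  -- integrability of the vector integrands
  have hGcont : Continuous (G x) := by fun_prop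
  have hGint : Integrable (G x) P₀ :=
    (integrable_const (s⁻¹ * (‖x‖ + a * R))).mono hGcont.aestronglyMeasurable
      (by
        filter_upwards [hae] with y hy
        rw [hGnorm]
        have h1 := hnorm_le x y hy
        have hFz := hFpos x y
        have hF1 := hFle1 x y
        have hsi : (0:ℝ) < s⁻¹ := inv_pos.mpr hs
        rw [Real.norm_eq_abs]
        rw [abs_of_nonneg (by positivity : (0:ℝ) ≤ s⁻¹ * (‖x‖ + a * R))]
        calc F x y * s⁻¹ * ‖x - a • y‖
            ≤ 1 * s⁻¹ * (‖x‖ + a * R) :=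
              mul_le_mul (mul_le_mul_of_nonneg_right hF1 hsi.le) h1 (norm_nonneg _)
                (by simpa using hsi.le)
          _ = s⁻¹ * (‖x‖ + a * R) := by ring)
  have h2int : Integrable (fun y => (s⁻¹ * F x y) • x) P₀ := by
    apply Integrable.smul_const
    exact (hF_int x).const_mul _
  have h_yint : Integrable (fun y => (s⁻¹ * F x y * a) • y) P₀ :=
    (integrable_const (s⁻¹ * a * R)).mono
      (Continuous.aestronglyMeasurable
        (((continuous_const.mul (hFcont x)).mul continuous_const).smul continuous_id))
      (by
        filter_upwards [hae] with y hy
        simp only [norm_smul, Real.norm_eq_abs]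
        have hFz := hFpos x y
        have hF1 := hFle1 x y
        have hsi : (0:ℝ) < s⁻¹ := inv_pos.mpr hs
        rw [abs_of_pos (by positivity : (0:ℝ) < s⁻¹ * F x y * a)]
        rw [abs_of_nonneg (by positivity : (0:ℝ) ≤ s⁻¹ * a * R)]
        nlinarith [mul_le_mul_of_nonneg_left hy
          (by positivity : (0:ℝ) ≤ s⁻¹ * F x y * a), norm_nonneg y,
          mul_le_mul_of_nonneg_right hF1 (by positivity : (0:ℝ) ≤ s⁻¹ * a * R)])
  have hpt : ∀ y : (EuclideanSpace ℝ (Fin d)), (s⁻¹ * F x y * a) • y = G x y + (s⁻¹ * F x y) • x := fun y => by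
    rw [hG_def]
    simp only
    module
  have h1 : ∫ y, (s⁻¹ * F x y * a) • y ∂P₀ = v + (s⁻¹ * f x) • x := by
    simp only [hpt]
    rw [integral_add hGint h2int, hv_def, integral_smul_const, integral_const_mul]
  have key : (f x)⁻¹ • v + s⁻¹ • x = (f x)⁻¹ • ∫ y, (s⁻¹ * F x y * a) • y ∂P₀ := by
    rw [h1, smul_add, smul_smul]
    rw [show (f x)⁻¹ * (s⁻¹ * f x) = s⁻¹ from by
      rw [mul_comm s⁻¹ (f x), ← mul_assoc, inv_mul_cancel₀ (hfpos x).ne', one_mul]]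
  rw [key]
  have hwnorm : ‖∫ y, (s⁻¹ * F x y * a) • y ∂P₀‖ ≤ s⁻¹ * a * R * f x := by
    refine (norm_integral_le_integral_norm _).trans ?_
    have hmono : ∫ y, ‖(s⁻¹ * F x y * a) • y‖ ∂P₀ ≤ ∫ y, (s⁻¹ * a * R) * F x y ∂P₀ := by
      apply integral_mono_ae h_yint.norm ((hF_int x).const_mul _)
      filter_upwards [hae] with y hy
      rw [norm_smul, Real.norm_eq_abs]
      have hFz := hFpos x y
      have hsi : (0:ℝ) < s⁻¹ := inv_pos.mpr hs
      rw [abs_of_pos (by positivity : (0:ℝ) < s⁻¹ * F x y * a)]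
      nlinarith [mul_le_mul_of_nonneg_left hy
        (by positivity : (0:ℝ) ≤ s⁻¹ * F x y * a), norm_nonneg y]
    refine hmono.trans_eq ?_
    rw [integral_const_mul]
  rw [norm_smul, Real.norm_eq_abs, abs_of_pos (inv_pos.mpr (hfpos x))]
  calc (f x)⁻¹ * ‖∫ y, (s⁻¹ * F x y * a) • y ∂P₀‖
      ≤ (f x)⁻¹ * (s⁻¹ * a * R * f x) :=
        mul_le_mul_of_nonneg_left hwnorm (le_of_lt (inv_pos.mpr (hfpos x)))
    _ = R / s * a := by
        rw [show s⁻¹ * a * R * f x = f x * (s⁻¹ * a * R) from by ring, ← mul_assoc,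
          inv_mul_cancel₀ (hfpos x).ne', one_mul, div_eq_mul_inv]
        ring
    _ ≤ R / (1 - Real.exp (-δ)) * a := by gcongr
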